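/- Every connected chordal graph with no induced paw is either a tree or a complete split graph. -/

import Mathlib

open SimpleGraph

/-- `H` occurs as an induced subgraph of `G` iff there is a graph embedding `H ↪g G`.
`Free H G` means `G` has no induced subgraph isomorphic to `H`. -/
def Free {α β : Type*} (H : SimpleGraph α) (G : SimpleGraph β) : Prop :=
  IsEmpty (H ↪g G)

/-- A graph is chordal if it has no induced cycle of length at least `4`. -/
def Chordal {V : Type*} (G : SimpleGraph V) : Prop :=
  ∀ n : ℕ, 4 ≤ n → _root_.Free (cycleGraph n) G

/-- A set is independent if no two of its vertices are adjacent. -/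
def IsIndepSet {V : Type*} (G : SimpleGraph V) (s : Set V) : Prop :=
  s.Pairwise fun u v => ¬ G.Adj u v

/-- `2P2`: the disjoint union of two edges. -/
def twoP2 : SimpleGraph (Fin 4) :=
  SimpleGraph.fromRel fun a b => (a = 0 ∧ b = 1) ∨ (a = 2 ∧ b = 3)

/-- The paw: a triangle `0,1,2` with a pendant vertex `3` adjacent to `2`. -/
def paw : SimpleGraph (Fin 4) :=
  SimpleGraph.fromRel fun a b =>
    (a = 0 ∧ b = 1) ∨ (a = 0 ∧ b = 2) ∨ (a = 1 ∧ b = 2) ∨ (a = 2 ∧ b = 3)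

/-- `P1 + paw`: an isolated vertex `0` together with a paw on `1,2,3,4`. -/
def p1Paw : SimpleGraph (Fin 5) :=
  SimpleGraph.fromRel fun a b =>
    (a = 1 ∧ b = 2) ∨ (a = 1 ∧ b = 3) ∨ (a = 2 ∧ b = 3) ∨ (a = 3 ∧ b = 4)

/-- `2P1 + P3`: two isolated vertices `0,1` and a path `2-3-4`. -/
def twoP1P3 : SimpleGraph (Fin 5) :=
  SimpleGraph.fromRel fun a b => (a = 2 ∧ b = 3) ∨ (a = 3 ∧ b = 4)

/-- The chair `S_{1,1,2}`: centre `0` with leaves `1,2` and pendant path `0-3-4`. -/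
def chair : SimpleGraph (Fin 5) :=
  SimpleGraph.fromRel fun a b =>
    (a = 0 ∧ b = 1) ∨ (a = 0 ∧ b = 2) ∨ (a = 0 ∧ b = 3) ∨ (a = 3 ∧ b = 4)

/-- `P1 + diamond`: an isolated vertex `0` and a diamond (`K4` minus the edge `3-4`)
on `1,2,3,4`. -/
def p1Diamond : SimpleGraph (Fin 5) :=
  SimpleGraph.fromRel fun a b =>
    (a = 1 ∧ b = 2) ∨ (a = 1 ∧ b = 3) ∨ (a = 1 ∧ b = 4) ∨ (a = 2 ∧ b = 3) ∨ (a = 2 ∧ b = 4)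

/-- `P2 + P4`: an edge `0-1` and a path `2-3-4-5`. -/
def p2P4 : SimpleGraph (Fin 6) :=
  SimpleGraph.fromRel fun a b =>
    (a = 0 ∧ b = 1) ∨ (a = 2 ∧ b = 3) ∨ (a = 3 ∧ b = 4) ∨ (a = 4 ∧ b = 5)

/-- `S_{1,2,3}`: centre `0` with pendant paths `0-1`, `0-2-3` and `0-4-5-6`. -/
def s123 : SimpleGraph (Fin 7) :=
  SimpleGraph.fromRel fun a b =>
    (a = 0 ∧ b = 1) ∨ (a = 0 ∧ b = 2) ∨ (a = 2 ∧ b = 3) ∨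
    (a = 0 ∧ b = 4) ∨ (a = 4 ∧ b = 5) ∨ (a = 5 ∧ b = 6)

/-- A complete split graph: a clique `K` complete to an independent set `I`,
together covering all vertices. -/
def IsCompleteSplit {V : Type*} (G : SimpleGraph V) : Prop :=
  ∃ K I : Set V, (∀ v, v ∈ K ∨ v ∈ I) ∧ (∀ v, ¬ (v ∈ K ∧ v ∈ I)) ∧
    G.IsClique K ∧ _root_.IsIndepSet G I ∧ ∀ k ∈ K, ∀ i ∈ I, G.Adj k i


section AuxWalk
namespace SimpleGraph.Walk
variable {V : Type*} {G : SimpleGraph V}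

/-- Take the first `n` darts of a walk. -/
def wtake {u v : V} : (p : G.Walk u v) → (n : ℕ) → G.Walk u (p.getVert n)
  | .nil, _ => .nil
  | .cons _ _, 0 => .nil
  | .cons h q, (n+1) => .cons h (q.wtake n)

lemma getVert_wtake {u v : V} (p : G.Walk u v) (n i : ℕ) :
    (p.wtake n).getVert i = p.getVert (min i n) := by
  induction p generalizing n i with
  | nil => simp [wtake, getVert]
  | cons h q ih =>
    cases n with
    | zero => simp [wtake, getVert]
    | succ n =>
      cases i with
      | zero => simp [wtake]
      | succ i => simpa [wtake, getVert_cons_succ, Nat.succ_min_succ] using ih n i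

lemma length_wtake {u v : V} (p : G.Walk u v) (n : ℕ) :
    (p.wtake n).length = min n p.length := by
  induction p generalizing n with
  | nil => simp [wtake]
  | cons h q ih =>
    cases n with
    | zero => simp [wtake]; rfl
    | succ n => simp [wtake, ih, Nat.succ_min_succ]

lemma getVert_drop {u v : V} (p : G.Walk u v) (n i : ℕ) :
    (p.drop n).getVert i = p.getVert (n + i) := by
  induction p generalizing n with
  | nil => simp [drop, getVert]
  | cons h q ih =>
    cases n with
    | zero => simp [drop]
    | succ n => simpa [drop, getVert_cons_succ, Nat.succ_add] using ih n

lemma length_drop' {u v : V} (p : G.Walk u v) (n : ℕ) :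
    (p.drop n).length = p.length - n := by
  induction p generalizing n with
  | nil => simp [drop]
  | cons h q ih =>
    cases n with
    | zero => simp [drop]
    | succ n => simp [drop, ih]

lemma support_eq_map_getVert {u v : V} (p : G.Walk u v) :
    p.support = (List.range (p.length + 1)).map p.getVert := by
  induction p with
  | nil => simp [getVert]
  | cons h q ih =>
    have hr : List.range (q.length + 1 + 1) = 0 :: (List.range (q.length+1)).map (·+1) :=
      List.range_succ_eq_map
    rw [support_cons, ih, length_cons, hr, List.map_cons, List.map_map]
    simp [Function.comp_def, getVert_cons_succ, getVert_zero]

lemma mem_edges_exists_getVert {u v x y : V} (p : G.Walk u v) (h : s(x, y) ∈ p.edges) :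
    ∃ i < p.length, (p.getVert i = x ∧ p.getVert (i+1) = y) ∨
      (p.getVert i = y ∧ p.getVert (i+1) = x) := by
  induction p with
  | nil => simp at h
  | cons hadj q ih =>
    rw [edges_cons, List.mem_cons] at h
    rcases h with h | h
    · refine ⟨0, by simp, ?_⟩
      rw [Sym2.eq_iff] at h
      rcases h with ⟨rfl, rfl⟩ | ⟨rfl, rfl⟩
      · left; simp [getVert_cons_succ]
      · right; simp [getVert_cons_succ]
    · obtain ⟨i, hi, hor⟩ := ih h
      exact ⟨i + 1, by simpa using Nat.succ_lt_succ hi,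
        by simpa [getVert_cons_succ] using hor⟩

lemma isPath_of_getVert_injOn {u v : V} (p : G.Walk u v)
    (h : ∀ i ≤ p.length, ∀ j ≤ p.length, p.getVert i = p.getVert j → i = j) :
    p.IsPath := by
  apply IsPath.mk'
  rw [support_eq_map_getVert]
  refine List.Nodup.map_on ?_ List.nodup_range
  intro i hi j hj hij
  exact h i (by simpa using Nat.lt_succ_iff.mp (List.mem_range.mp hi))
    j (by simpa using Nat.lt_succ_iff.mp (List.mem_range.mp hj)) hij

lemma IsCycle.getVert_injOn'' {v : V} {c : G.Walk v v} (hc : c.IsCycle) :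
    ∀ i < c.length, ∀ j < c.length, c.getVert i = c.getVert j → i = j := by
  have hnodup : c.support.tail.Nodup := hc.2
  have hsup : c.support.tail = (List.range c.length).map (fun k => c.getVert (k + 1)) := by
    rw [support_eq_map_getVert, List.range_succ_eq_map]
    simp [List.map_map, Function.comp_def]
  rw [hsup] at hnodup
  have hinj := List.inj_on_of_nodup_map hnodup
  have h3 := hc.three_le_length
  have key : ∀ i < c.length, ∀ j < c.length,
      c.getVert (i+1) = c.getVert (j+1) → i = j := by
    intro i hi j hj hij
    exact hinj (List.mem_range.mpr hi) (List.mem_range.mpr hj) hij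
  intro i hi j hj hij
  rcases Nat.eq_zero_or_pos i with rfl | hi0
  · rcases Nat.eq_zero_or_pos j with rfl | hj0
    · rfl
    · exfalso
      have e1 : c.getVert (c.length - 1 + 1) = c.getVert ((j - 1) + 1) := by
        rw [show c.length - 1 + 1 = c.length from by omega, show j - 1 + 1 = j from by omega,
          getVert_length]
        rw [getVert_zero] at hij
        exact hij
      have := key _ (by omega) _ (by omega) e1
      omega
  · rcases Nat.eq_zero_or_pos j with rfl | hj0
    · exfalso
      have e1 : c.getVert ((i - 1) + 1) = c.getVert (c.length - 1 + 1) := by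
        rw [show c.length - 1 + 1 = c.length from by omega, show i - 1 + 1 = i from by omega,
          getVert_length]
        rw [getVert_zero] at hij
        exact hij
      have := key _ (by omega) _ (by omega) e1
      omega
    · have := key (i-1) (by omega) (j-1) (by omega)
        (by rw [show i - 1 + 1 = i from by omega, show j - 1 + 1 = j from by omega]; exact hij)
      omega

end SimpleGraph.Walk


section Aux
variable {V : Type*} {G : SimpleGraph V}


lemma paw_embed (hf : _root_.Free paw G) {a b c d : V}
    (hab : G.Adj a b) (hac : G.Adj a c) (hbc : G.Adj b c) (hcd : G.Adj c d)
    (had : ¬ G.Adj a d) (hbd : ¬ G.Adj b d) : False := by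
  have hane : a ≠ d := fun h => hbd (h ▸ hab.symm)
  have hbne : b ≠ d := fun h => had (h ▸ hab)
  have hinj : Function.Injective (![a, b, c, d] : Fin 4 → V) := by
    intro i j hij
    fin_cases i <;> fin_cases j <;> simp_all <;>
      first
        | rfl
        | exact absurd hij hab.ne | exact absurd hij.symm hab.ne
        | exact absurd hij hac.ne | exact absurd hij.symm hac.ne
        | exact absurd hij hbc.ne | exact absurd hij.symm hbc.ne
        | exact absurd hij hcd.ne | exact absurd hij.symm hcd.ne
        | exact absurd hij hane | exact absurd hij.symm hane
        | exact absurd hij hbne | exact absurd hij.symm hbne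
  have hda' : ¬ G.Adj d a := fun h => had h.symm
  have hdb' : ¬ G.Adj d b := fun h => hbd h.symm
  refine hf.false ⟨⟨![a, b, c, d], hinj⟩, @fun i j => ?_⟩
  fin_cases i <;> fin_cases j <;>
    simp [paw, fromRel_adj, hab, hac, hbc, hcd, had, hbd, hab.symm, hac.symm, hbc.symm,
      hcd.symm, hda', hdb', G.irrefl, hane, hbne] <;> decide

lemma c4_embed (hch : Chordal G) {a b c d : V}
    (hab : G.Adj a b) (hbc : G.Adj b c) (hcd : G.Adj c d) (hda : G.Adj d a)
    (hacne : a ≠ c) (hbdne : b ≠ d) (hac : ¬ G.Adj a c) (hbd : ¬ G.Adj b d) : False := by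
  have hinj : Function.Injective (![a, b, c, d] : Fin 4 → V) := by
    intro i j hij
    fin_cases i <;> fin_cases j <;> simp_all <;>
      first
        | rfl
        | exact absurd hij hab.ne | exact absurd hij.symm hab.ne
        | exact absurd hij hbc.ne | exact absurd hij.symm hbc.ne
        | exact absurd hij hcd.ne | exact absurd hij.symm hcd.ne
        | exact absurd hij hda.ne | exact absurd hij.symm hda.ne
        | exact absurd hij hacne | exact absurd hij.symm hacne
        | exact absurd hij hbdne | exact absurd hij.symm hbdne
  have hca' : ¬ G.Adj c a := fun h => hac h.symm
  have hdb' : ¬ G.Adj d b := fun h => hbd h.symm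
  refine (hch 4 le_rfl).false ⟨⟨![a, b, c, d], hinj⟩, @fun i j => ?_⟩
  fin_cases i <;> fin_cases j <;>
    simp [cycleGraph_adj, hab, hbc, hcd, hda, hab.symm, hbc.symm, hcd.symm, hda.symm,
      hac, hbd, hca', hdb', G.irrefl, hacne, hbdne] <;> decide

lemma conn_ind (hc : G.Connected) (P : V → Prop)
    (hstep : ∀ x y, P x → G.Adj x y → P y) {a : V} (ha : P a) : ∀ v, P v := by
  intro v
  have hr : G.Reachable a v := hc.preconnected a v
  obtain ⟨w⟩ := hr
  have : ∀ {x y : V} (_ : G.Walk x y), P x → P y := by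
    intro x y p
    induction p with
    | nil => exact id
    | cons h q ih => exact fun hx => ih (hstep _ _ hx h)
  exact this w ha

lemma split_of_triangle (hc : G.Connected) (hch : Chordal G) (hf : _root_.Free paw G)
    (ht : ∃ a b c : V, G.Adj a b ∧ G.Adj a c ∧ G.Adj b c) : IsCompleteSplit G := by
  classical
  obtain ⟨a₀, b₀, c₀, hab₀, hac₀, hbc₀⟩ := ht
  -- every vertex is in a triangle
  have allTri : ∀ v : V, ∃ a b, G.Adj v a ∧ G.Adj v b ∧ G.Adj a b := by
    apply conn_ind hc (fun v => ∃ a b, G.Adj v a ∧ G.Adj v b ∧ G.Adj a b)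
      (a := a₀) ?_ ⟨b₀, c₀, hab₀, hac₀, hbc₀⟩
    rintro x y ⟨a, b, hxa, hxb, hab⟩ hxy
    by_cases hya : G.Adj y a
    · exact ⟨x, a, hxy.symm, hya, hxa⟩
    by_cases hyb : G.Adj y b
    · exact ⟨x, b, hxy.symm, hyb, hxb⟩
    exact absurd (paw_embed hf hab hxa.symm hxb.symm hxy
      (fun h => hya h.symm) (fun h => hyb h.symm)) not_false
  -- every edge is in a triangle
  have edgeTri : ∀ u v : V, G.Adj u v → ∃ w, G.Adj u w ∧ G.Adj v w := by
    intro u v huv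
    obtain ⟨a, b, hua, hub, hab⟩ := allTri u
    by_cases hva : G.Adj v a
    · exact ⟨a, hua, hva⟩
    by_cases hvb : G.Adj v b
    · exact ⟨b, hub, hvb⟩
    exact absurd (paw_embed hf hab hua.symm hub.symm huv
      (fun h => hva h.symm) (fun h => hvb h.symm)) not_false
  -- key local claim
  have claim3 : ∀ u v x y : V, G.Adj u v → G.Adj u x → ¬ G.Adj v x → x ≠ v →
      G.Adj v y → ¬ G.Adj u y → y ≠ u → False := by
    intro u v x y huv hux hvx hxv hvy huy hyu
    by_cases hxy : G.Adj x y
    · exact c4_embed hch hux.symm huv hvy hxy.symm hxv hyu.symm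
        (fun h => hvx h.symm) huy
    obtain ⟨w, huw, hvw⟩ := edgeTri u v huv
    by_cases hwx : G.Adj w x
    · by_cases hwy : G.Adj w y
      · exact paw_embed hf hux.symm hwx.symm huw hwy hxy huy
      · exact paw_embed hf huw huv hvw.symm hvy huy hwy
    · exact paw_embed hf hvw huv.symm huw.symm hux hvx hwx
  -- distance 2 implies neighborhood inclusion
  have dist2sub : ∀ a b x : V, ¬ G.Adj a b → a ≠ b → G.Adj a x → G.Adj x b →
      ∀ c, G.Adj a c → G.Adj b c := by
    intro a b x hnab hab hax hxb c hac
    by_cases hcx : c = x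
    · exact hcx ▸ hxb.symm
    have hcx' : G.Adj c x := by
      by_contra hcon
      exact claim3 a x c b hax hac (fun h => hcon h.symm) hcx hxb hnab
        (Ne.symm hab)
    by_contra hbc
    exact paw_embed hf hac hax hcx' hxb hnab (fun h => hbc h.symm)
  -- any two nonadjacent vertices have a common neighbor
  have reach2 : ∀ a v : V, v = a ∨ G.Adj a v ∨ ∃ x, G.Adj a x ∧ G.Adj x v := by
    intro a
    apply conn_ind hc (fun v => v = a ∨ G.Adj a v ∨ ∃ x, G.Adj a x ∧ G.Adj x v)
      ?_ (a := a) (Or.inl rfl)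
    rintro v w hv hvw
    by_cases hwa : w = a
    · exact Or.inl hwa
    by_cases haw : G.Adj a w
    · exact Or.inr (Or.inl haw)
    rcases hv with rfl | hav | ⟨x, hax, hxv⟩
    · exact Or.inr (Or.inl hvw)
    · exact Or.inr (Or.inr ⟨v, hav, hvw⟩)
    · by_cases hav : G.Adj a v
      · exact Or.inr (Or.inr ⟨v, hav, hvw⟩)
      by_cases hva : v = a
      · exact absurd (hva ▸ hvw) haw
      exact absurd (dist2sub v a x (fun h => hav h.symm) hva hxv.symm hax.symm w hvw) haw
  have sameNbhd : ∀ a b : V, ¬ G.Adj a b → a ≠ b → ∀ c, G.Adj a c → G.Adj b c := by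
    intro a b hnab hab
    rcases reach2 a b with rfl | h | ⟨x, hax, hxb⟩
    · exact absurd rfl hab
    · exact absurd h hnab
    · exact dist2sub a b x hnab hab hax hxb
  refine ⟨{v | ∀ w, w ≠ v → G.Adj v w}, {v | ¬ ∀ w, w ≠ v → G.Adj v w}, ?_, ?_, ?_, ?_, ?_⟩
  · intro v; exact em _
  · rintro v ⟨h1, h2⟩; exact h2 h1
  · intro u hu v hv huv
    exact hu v (Ne.symm huv)
  · intro u hu v hv huv hadj
    push_neg at hu hv
    obtain ⟨p, hpu, hup⟩ := hu
    obtain ⟨q, hqv, hvq⟩ := hv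
    have hpv : p ≠ v := fun h => hup (h ▸ hadj)
    have hqu : q ≠ u := fun h => hvq (h ▸ hadj.symm)
    have hvp : G.Adj v p := (sameNbhd u p hup (Ne.symm hpu) v hadj).symm
    have huq : G.Adj u q := (sameNbhd v q hvq (Ne.symm hqv) u hadj.symm).symm
    have hpq : p ≠ q := fun h => hup (h ▸ huq)
    by_cases hpqadj : G.Adj p q
    · exact c4_embed hch hadj hvp hpqadj huq.symm (Ne.symm hpu) (Ne.symm hqv) hup hvq
    · exact hup (sameNbhd q p (fun h => hpqadj h.symm) (Ne.symm hpq) u huq.symm).symm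
  · intro k hk i hi
    have hne : i ≠ k := fun h => hi (h ▸ hk)
    exact hk i hne

lemma acyclic_of_triangleFree (hch : Chordal G)
    (ht : ¬ ∃ a b c : V, G.Adj a b ∧ G.Adj a c ∧ G.Adj b c) : G.IsAcyclic := by
  classical
  by_contra hcy
  simp only [IsAcyclic, not_forall, not_not] at hcy
  have hS : {n : ℕ | ∃ (v : V) (c : G.Walk v v), c.IsCycle ∧ c.length = n}.Nonempty := by
    obtain ⟨v, c, hc⟩ := hcy
    exact ⟨c.length, v, c, hc, rfl⟩
  obtain ⟨v, c, hcyc, hclen⟩ := Nat.sInf_mem hS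
  have hmin : ∀ (w : V) (d : G.Walk w w), d.IsCycle → c.length ≤ d.length := by
    intro w d hd
    rw [hclen]
    exact Nat.sInf_le ⟨w, d, hd, rfl⟩
  clear hclen hS hcy
  have h3 : 3 ≤ c.length := hcyc.three_le_length
  have hinj := hcyc.getVert_injOn''
  have hwrap : c.getVert c.length = c.getVert 0 := by
    rw [c.getVert_length, c.getVert_zero]
  have key : ∀ i j, i < j → j < c.length → G.Adj (c.getVert i) (c.getVert j) →
      j = i + 1 ∨ (i = 0 ∧ j = c.length - 1) := by
    intro i j hij hj hadj
    by_contra hcon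
    push_neg at hcon
    have h2 : i + 2 ≤ j := by omega
    have hlt : j - i ≤ c.length - 2 := by omega
    have hend : (c.drop i).getVert (j - i) = c.getVert j := by
      rw [Walk.getVert_drop]; congr 1; omega
    set q := ((c.drop i).wtake (j - i)).copy rfl hend with hq
    have hqlen : q.length = j - i := by
      simp only [hq, Walk.length_copy, Walk.length_wtake, Walk.length_drop']
      omega
    have hqget : ∀ k, k ≤ j - i → q.getVert k = c.getVert (i + k) := by
      intro k hk
      simp only [hq, Walk.getVert_copy, Walk.getVert_wtake, Walk.getVert_drop,
        Nat.min_eq_left hk]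
    have hqpath : q.IsPath := by
      apply Walk.isPath_of_getVert_injOn
      intro k hk l hl hkl
      rw [hqlen] at hk hl
      rw [hqget k hk, hqget l hl] at hkl
      have := hinj (i+k) (by omega) (i+l) (by omega) hkl
      omega
    have hnotmem : s(c.getVert j, c.getVert i) ∉ q.edges := by
      intro hmem
      obtain ⟨k, hk, hor⟩ := Walk.mem_edges_exists_getVert q hmem
      rw [hqlen] at hk
      rw [hqget k (by omega), hqget (k+1) (by omega)] at hor
      rcases hor with ⟨h1, _⟩ | ⟨h1, hh2⟩
      · have := hinj (i+k) (by omega) j (by omega) h1; omega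
      · have e1 := hinj (i+k) (by omega) i (by omega) h1
        have e2 := hinj (i+(k+1)) (by omega) j (by omega) hh2
        omega
    have hcyc2 : (Walk.cons hadj.symm q).IsCycle :=
      (Walk.cons_isCycle_iff q hadj.symm).mpr ⟨hqpath, hnotmem⟩
    have := hmin _ _ hcyc2
    rw [Walk.length_cons, hqlen] at this
    omega
  rcases Nat.lt_or_ge c.length 4 with h4 | h4
  · -- triangle
    have h01 : G.Adj (c.getVert 0) (c.getVert 1) := c.adj_getVert_succ (by omega)
    have h12 : G.Adj (c.getVert 1) (c.getVert 2) := c.adj_getVert_succ (by omega)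
    have h23 : G.Adj (c.getVert 2) (c.getVert 3) := c.adj_getVert_succ (by omega)
    have hl : c.length = 3 := by omega
    have h30 : c.getVert 3 = c.getVert 0 := by rw [← hl]; exact hwrap
    rw [h30] at h23
    exact ht ⟨_, _, _, h01, h23.symm, h12⟩
  · -- induced cycle of length ≥ 4
    have hval : ∀ (x y : Fin c.length), (x - y).val = ((c.length - y.val) + x.val) % c.length := by
      intro x y; rw [Fin.sub_def]
    have hsub : ∀ (x y : Fin c.length),
        ((x - y).val = 1 ↔ (x.val = y.val + 1 ∨ (x.val = 0 ∧ y.val = c.length - 1))) := by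
      intro x y
      rw [hval]
      have hx := x.isLt; have hy := y.isLt
      rcases Nat.lt_or_ge ((c.length - y.val) + x.val) c.length with h | h
      · rw [Nat.mod_eq_of_lt h]; omega
      · have hlt2 : (c.length - y.val) + x.val - c.length < c.length := by omega
        rw [Nat.mod_eq_sub_mod h, Nat.mod_eq_of_lt hlt2]; omega
    refine (hch c.length h4).false ⟨⟨fun k => c.getVert k.val, ?_⟩, @fun a b => ?_⟩
    · intro x y hxy
      exact Fin.ext (hinj x.val x.isLt y.val y.isLt hxy)
    · rw [cycleGraph_adj']
      constructor
      · intro hadj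
        rcases lt_trichotomy a.val b.val with hab | hab | hab
        · rcases key a.val b.val hab b.isLt hadj with h | ⟨h1, h2⟩
          · exact Or.inr ((hsub b a).mpr (Or.inl h))
          · exact Or.inl ((hsub a b).mpr (Or.inr ⟨h1, h2⟩))
        · exact absurd (congrArg c.getVert hab) hadj.ne
        · rcases key b.val a.val hab a.isLt hadj.symm with h | ⟨h1, h2⟩
          · exact Or.inl ((hsub a b).mpr (Or.inl h))
          · exact Or.inr ((hsub b a).mpr (Or.inr ⟨h1, h2⟩))
      · intro h
        have step : ∀ (x y : Fin c.length), x.val = y.val + 1 →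
            G.Adj (c.getVert x.val) (c.getVert y.val) := by
          intro x y hxy
          have : G.Adj (c.getVert y.val) (c.getVert (y.val + 1)) :=
            c.adj_getVert_succ (by omega)
          rw [← hxy] at this
          exact this.symm
        have wrap : ∀ (x y : Fin c.length), x.val = 0 → y.val = c.length - 1 →
            G.Adj (c.getVert x.val) (c.getVert y.val) := by
          intro x y hx hy
          have : G.Adj (c.getVert (c.length - 1)) (c.getVert (c.length - 1 + 1)) :=
            c.adj_getVert_succ (by omega)
          rw [show c.length - 1 + 1 = c.length from by omega, hwrap] at this
          rw [hx, hy]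
          exact this.symm
        rcases h with h | h
        · rcases (hsub a b).mp h with h' | ⟨h1, h2⟩
          · exact step a b h'
          · exact wrap a b h1 h2
        · rcases (hsub b a).mp h with h' | ⟨h1, h2⟩
          · exact (step b a h').symm
          · exact (wrap b a h1 h2).symm

end Aux

/-- Every connected paw-free chordal graph is a tree or a complete split graph. -/
theorem pawFree_chordal_tree_or_completeSplit {V : Type*}
    (G : SimpleGraph V) (hc : G.Connected) (hch : Chordal G) (hf : _root_.Free paw G) :
    G.IsTree ∨ IsCompleteSplit G := by
  classical
  by_cases ht : ∃ a b c : V, G.Adj a b ∧ G.Adj a c ∧ G.Adj b c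
  · exact Or.inr (split_of_triangle hc hch hf ht)
  · exact Or.inl ⟨hc, acyclic_of_triangleFree hch ht⟩
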